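/- Under the hypotheses of the global existence theorem (0 < ε < 1/(4η) and ess sup_ξ |ξ|²|û₀| + sup_t ess sup_ξ |F̂(·,t)| < ε), assume in addition that û₀ is homogeneous of degree −2 in the sense that for every λ > 0 and a.e. ξ, û₀(ξ) = λ^{−2} û₀(ξ/λ), and that F̂ satisfies for every λ > 0, every t ≥ 0 and a.e. ξ: F̂(ξ,t) = F̂(ξ/λ, λ²t). Then the unique mild solution û with sup_{t≥0} ess sup_ξ |ξ|²|û(ξ,t)| ≤ 2ε is self-similar: for every λ > 0, every t ≥ 0 and a.e. ξ, û(ξ,t) = λ^{−2} û(ξ/λ, λ²t). -/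

import Mathlib

open MeasureTheory Filter
open scoped ENNReal

noncomputable section

abbrev E3 : Type := EuclideanSpace ℝ (Fin 3)
abbrev V3 : Type := Fin 3 → ℂ

/-- The `PM^a` norm (on the Fourier side): `ess sup_ξ |ξ|^a |g(ξ)|`, valued in `ℝ≥0∞`. -/
def PMnorm (a : ℝ) (g : E3 → V3) : ℝ≥0∞ :=
  essSup (fun ξ : E3 => ENNReal.ofReal (‖ξ‖ ^ a * ‖g ξ‖)) volume

/-- The symbol `P̂(ξ)_{jk} = δ_{jk} − ξ_j ξ_k / |ξ|²` of the Leray projector. -/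
def LerayP (ξ : E3) : Matrix (Fin 3) (Fin 3) ℂ :=
  fun j k => (if j = k then (1 : ℂ) else 0) - ((ξ j : ℂ) * (ξ k : ℂ)) / ((‖ξ‖ : ℂ) ^ 2)

/-- The matrix-valued convolution
`Ŵ[v,w](ξ)_{jk} = (2π)^{-3/2} ∫ v_j(ξ−z) w_k(z) dz`
(the Fourier transform of the tensor product `v ⊗ w`). -/
def Wconv (v w : E3 → V3) (ξ : E3) : Matrix (Fin 3) (Fin 3) ℂ :=
  fun j k => (((2 * Real.pi) ^ ((3 : ℝ) / 2))⁻¹ : ℝ) • ∫ z : E3, v (ξ - z) j * w z k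

/-- The vector `iξ·Ŵ[v,w](ξ)`, with components `Σ_k iξ_k Ŵ[v,w](ξ)_{jk}`. -/
def ixW (v w : E3 → V3) (ξ : E3) : V3 :=
  fun j => ∑ k : Fin 3, Complex.I * (ξ k : ℂ) * Wconv v w ξ j k

/-- The Fourier side of the Navier–Stokes bilinear Duhamel term
`B(u,v)(t) = −∫₀ᵗ S(t−τ) P ∇·(u⊗v) dτ` (up to sign):
`∫₀ᵗ e^{−(t−τ)|ξ|²} P̂(ξ)( iξ·Ŵ[û(τ),v̂(τ)](ξ) ) dτ`. -/
def Bterm (u v : E3 → ℝ → V3) (ξ : E3) (t : ℝ) : V3 :=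
  ∫ τ in (0 : ℝ)..t, Real.exp (-(t - τ) * ‖ξ‖ ^ 2) •
    (LerayP ξ).mulVec (ixW (fun ζ => u ζ τ) (fun ζ => v ζ τ) ξ)

/-- The Fourier side of the Duhamel force term `∫₀ᵗ S(t−τ) P F(τ) dτ`. -/
def Fterm (F : E3 → ℝ → V3) (ξ : E3) (t : ℝ) : V3 :=
  ∫ τ in (0 : ℝ)..t, Real.exp (-(t - τ) * ‖ξ‖ ^ 2) • (LerayP ξ).mulVec (F ξ τ)

/-- `sup_{t ≥ 0} ‖u(t)‖_{PM^a}`. -/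
def supPM (a : ℝ) (u : E3 → ℝ → V3) : ℝ≥0∞ :=
  ⨆ (t : ℝ) (_ : 0 ≤ t), PMnorm a (fun ξ => u ξ t)

/-- A Fourier-side mild solution of the Navier–Stokes system with data `(û₀, F̂)`:
`û` is jointly measurable, all integrals converge absolutely, and for every `t ≥ 0`
and a.e. `ξ`,
`û(ξ,t) = e^{−t|ξ|²} û₀(ξ) − ∫₀ᵗ e^{−(t−τ)|ξ|²} P̂(ξ)(iξ·Ŵ[û(τ),û(τ)](ξ)) dτ
 + ∫₀ᵗ e^{−(t−τ)|ξ|²} P̂(ξ) F̂(ξ,τ) dτ`. -/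
def IsMildSolution (u0 : E3 → V3) (F : E3 → ℝ → V3) (u : E3 → ℝ → V3) : Prop :=
  Measurable (fun p : E3 × ℝ => u p.1 p.2) ∧
  ∀ t : ℝ, 0 ≤ t → ∀ᵐ ξ : E3,
    (∀ τ ∈ Set.Icc (0 : ℝ) t, ∀ j k : Fin 3,
        Integrable (fun z : E3 => u (ξ - z) τ j * u z τ k)) ∧
    IntervalIntegrable (fun τ : ℝ =>
        Real.exp (-(t - τ) * ‖ξ‖ ^ 2) •
          (LerayP ξ).mulVec (ixW (fun ζ => u ζ τ) (fun ζ => u ζ τ) ξ)) volume 0 t ∧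
    IntervalIntegrable (fun τ : ℝ =>
        Real.exp (-(t - τ) * ‖ξ‖ ^ 2) • (LerayP ξ).mulVec (F ξ τ)) volume 0 t ∧
    u ξ t = Real.exp (-t * ‖ξ‖ ^ 2) • u0 ξ - Bterm u u ξ t + Fterm F ξ t

/-- `η` is a constant for which the `PM²` bilinear estimate holds:
`‖B(u,v)(t)‖_{PM²} ≤ η (sup_τ ‖u(τ)‖_{PM²})(sup_τ ‖v(τ)‖_{PM²})`. -/
def BilinearEstimate (η : ℝ) : Prop :=
  ∀ u v : E3 → ℝ → V3,
    Measurable (fun p : E3 × ℝ => u p.1 p.2) →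
    Measurable (fun p : E3 × ℝ => v p.1 p.2) →
    ∀ t : ℝ, 0 ≤ t →
      PMnorm 2 (fun ξ => Bterm u v ξ t) ≤ ENNReal.ofReal η * supPM 2 u * supPM 2 v


variable {lam : ℝ}

lemma norm_inv_smul (h : 0 < lam) (ξ : E3) : ‖lam⁻¹ • ξ‖ = lam⁻¹ * ‖ξ‖ := by
  rw [norm_smul, Real.norm_eq_abs, abs_of_pos (inv_pos.2 h)]

lemma LerayP_smul (h : 0 < lam) (ξ : E3) : LerayP (lam⁻¹ • ξ) = LerayP ξ := by
  funext j k
  unfold LerayP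
  congr 1
  rcases eq_or_ne ξ 0 with rfl | hξ
  · simp
  · have hn : ‖ξ‖ ≠ 0 := norm_ne_zero_iff.2 hξ
    rw [norm_inv_smul h ξ]
    have hj : (lam⁻¹ • ξ) j = lam⁻¹ * ξ j := rfl
    have hk : (lam⁻¹ • ξ) k = lam⁻¹ * ξ k := rfl
    rw [hj, hk]
    push_cast
    have hl : (lam : ℂ)⁻¹ ≠ 0 := by
      simp [inv_ne_zero, Complex.ofReal_ne_zero, h.ne']
    have key : ((lam:ℂ)⁻¹ * (ξ j)) * ((lam:ℂ)⁻¹ * (ξ k)) / (((lam:ℂ)⁻¹ * ‖ξ‖) ^ 2)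
        = ((lam:ℂ)⁻¹ ^ 2 * ((ξ j) * (ξ k))) / ((lam:ℂ)⁻¹ ^ 2 * (‖ξ‖:ℂ) ^ 2) := by
      ring_nf
    rw [key, mul_div_mul_left _ _ (pow_ne_zero 2 hl)]

lemma Wconv_scale (h : 0 < lam) (a b : E3 → V3) (ξ : E3) (j k : Fin 3) :
    Wconv (fun ζ => (lam ^ 2)⁻¹ • a (lam⁻¹ • ζ)) (fun ζ => (lam ^ 2)⁻¹ • b (lam⁻¹ • ζ)) ξ j k
      = (lam⁻¹ : ℝ) • Wconv a b (lam⁻¹ • ξ) j k := by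
  unfold Wconv
  have hint : ∀ z : E3, ((lam ^ 2)⁻¹ • a (lam⁻¹ • (ξ - z))) j * ((lam ^ 2)⁻¹ • b (lam⁻¹ • z)) k
      = ((lam ^ 2)⁻¹ * (lam ^ 2)⁻¹) • (a (lam⁻¹ • ξ - lam⁻¹ • z) j * b (lam⁻¹ • z) k) := by
    intro z
    rw [smul_sub]
    show ((lam ^ 2)⁻¹ • a (lam⁻¹ • ξ - lam⁻¹ • z) j) * ((lam ^ 2)⁻¹ • b (lam⁻¹ • z) k) = _
    rw [smul_mul_smul_comm]
  simp only [hint]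
  rw [integral_smul]
  have := MeasureTheory.Measure.integral_comp_smul (μ := volume)
    (fun w : E3 => a (lam⁻¹ • ξ - w) j * b w k) lam⁻¹
  have hfr : Module.finrank ℝ E3 = 3 := by simp
  rw [hfr] at this
  rw [this, smul_smul, smul_smul, smul_smul]
  congr 1
  rw [abs_of_pos (by positivity)]
  field_simp

lemma ixW_scale (h : 0 < lam) (a b : E3 → V3) (ξ : E3) :
    ixW (fun ζ => (lam ^ 2)⁻¹ • a (lam⁻¹ • ζ)) (fun ζ => (lam ^ 2)⁻¹ • b (lam⁻¹ • ζ)) ξ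
      = ixW a b (lam⁻¹ • ξ) := by
  funext j
  unfold ixW
  refine Finset.sum_congr rfl fun k _ => ?_
  rw [Wconv_scale h a b ξ j k]
  have hk : (lam⁻¹ • ξ) k = lam⁻¹ * ξ k := rfl
  rw [hk, Complex.real_smul]
  push_cast
  ring

lemma exp_scale (h : 0 < lam) (ξ : E3) (t τ : ℝ) :
    Real.exp (-(lam ^ 2 * t - lam ^ 2 * τ) * ‖lam⁻¹ • ξ‖ ^ 2)
      = Real.exp (-(t - τ) * ‖ξ‖ ^ 2) := by
  congr 1
  rw [norm_inv_smul h, mul_pow]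
  field_simp

lemma Bterm_scale (h : 0 < lam) (u : E3 → ℝ → V3) (ξ : E3) (t : ℝ) :
    Bterm (fun ζ τ => (lam ^ 2)⁻¹ • u (lam⁻¹ • ζ) (lam ^ 2 * τ))
        (fun ζ τ => (lam ^ 2)⁻¹ • u (lam⁻¹ • ζ) (lam ^ 2 * τ)) ξ t
      = (lam ^ 2)⁻¹ • Bterm u u (lam⁻¹ • ξ) (lam ^ 2 * t) := by
  unfold Bterm
  have hc : (lam ^ 2 : ℝ) ≠ 0 := by positivity
  set g : ℝ → V3 := fun s => Real.exp (-(lam ^ 2 * t - s) * ‖lam⁻¹ • ξ‖ ^ 2) •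
      (LerayP (lam⁻¹ • ξ)).mulVec (ixW (fun ζ => u ζ s) (fun ζ => u ζ s) (lam⁻¹ • ξ)) with hg
  have key : ∀ τ : ℝ,
      Real.exp (-(t - τ) * ‖ξ‖ ^ 2) • (LerayP ξ).mulVec
        (ixW (fun ζ => (lam ^ 2)⁻¹ • u (lam⁻¹ • ζ) (lam ^ 2 * τ))
             (fun ζ => (lam ^ 2)⁻¹ • u (lam⁻¹ • ζ) (lam ^ 2 * τ)) ξ)
      = g (lam ^ 2 * τ) := by
    intro τ
    rw [hg]
    simp only
    rw [LerayP_smul h, exp_scale h]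
    rw [ixW_scale h (fun ζ => u ζ (lam ^ 2 * τ)) (fun ζ => u ζ (lam ^ 2 * τ)) ξ]
  simp only [key]
  rw [intervalIntegral.integral_comp_mul_left g hc, mul_zero]

lemma Fterm_scale (h : 0 < lam) (F : E3 → ℝ → V3) (ξ : E3) {t : ℝ} (ht : 0 ≤ t)
    (hae : ∀ᵐ τ : ℝ, 0 ≤ τ → F ξ τ = F (lam⁻¹ • ξ) (lam ^ 2 * τ)) :
    Fterm F ξ t = (lam ^ 2)⁻¹ • Fterm F (lam⁻¹ • ξ) (lam ^ 2 * t) := by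
  unfold Fterm
  have hc : (lam ^ 2 : ℝ) ≠ 0 := by positivity
  set g : ℝ → V3 := fun s => Real.exp (-(lam ^ 2 * t - s) * ‖lam⁻¹ • ξ‖ ^ 2) •
      (LerayP (lam⁻¹ • ξ)).mulVec (F (lam⁻¹ • ξ) s) with hg
  have key : ∀ᵐ τ : ℝ, τ ∈ Set.uIoc (0:ℝ) t →
      Real.exp (-(t - τ) * ‖ξ‖ ^ 2) • (LerayP ξ).mulVec (F ξ τ) = g (lam ^ 2 * τ) := by
    filter_upwards [hae] with τ hτ hmem
    have h0 : 0 ≤ τ := by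
      rw [Set.uIoc_of_le ht] at hmem
      exact hmem.1.le
    rw [hg]; simp only
    rw [LerayP_smul h, exp_scale h, hτ h0]
  rw [intervalIntegral.integral_congr_ae key,
    intervalIntegral.integral_comp_mul_left g hc, mul_zero]

lemma F_ae_slices (h : 0 < lam) {F : E3 → ℝ → V3}
    (hFm : Measurable (fun p : E3 × ℝ => F p.1 p.2))
    (hFhom : ∀ t : ℝ, 0 ≤ t → ∀ᵐ ξ : E3, F ξ t = F (lam⁻¹ • ξ) (lam ^ 2 * t)) :
    ∀ᵐ ξ : E3, ∀ᵐ τ : ℝ, 0 ≤ τ → F ξ τ = F (lam⁻¹ • ξ) (lam ^ 2 * τ) := by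
  set S : Set (E3 × ℝ) :=
    {p | 0 ≤ p.2 ∧ ¬ F p.1 p.2 = F (lam⁻¹ • p.1) (lam ^ 2 * p.2)} with hSdef
  have hg : Measurable (fun p : E3 × ℝ => F (lam⁻¹ • p.1) (lam ^ 2 * p.2)) := by
    exact hFm.comp ((measurable_const_smul lam⁻¹).comp measurable_fst |>.prodMk
      ((measurable_const_mul (lam ^ 2)).comp measurable_snd))
  have hSm : MeasurableSet S := by
    refine MeasurableSet.inter ?_ ?_
    · exact measurable_snd measurableSet_Ici
    · exact (measurableSet_eq_fun hFm hg).compl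
  have hTm : MeasurableSet (Prod.swap ⁻¹' S : Set (ℝ × E3)) :=
    hSm.preimage measurable_swap
  have hT : (volume.prod volume) (Prod.swap ⁻¹' S : Set (ℝ × E3)) = 0 := by
    rw [Measure.measure_prod_null hTm]
    refine Filter.Eventually.of_forall fun τ => ?_
    rcases le_or_gt 0 τ with hτ | hτ
    · refine measure_mono_null
        (fun ξ (hξ' : ξ ∈ Prod.mk τ ⁻¹' (Prod.swap ⁻¹' S)) => hξ'.2) (ae_iff.1 (hFhom τ hτ))
    · have : (Prod.mk τ ⁻¹' (Prod.swap ⁻¹' S) : Set E3) = ∅ := by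
        ext ξ; simp only [Set.mem_preimage, Set.mem_empty_iff_false, iff_false]
        exact fun hx => absurd hx.1 hτ.not_ge
      simp [this]
  have hSnull : (volume.prod volume) S = 0 := by
    have := (Measure.measurePreserving_swap (μ := (volume : Measure ℝ))
      (ν := (volume : Measure E3))).measure_preimage (hSm.nullMeasurableSet)
    rw [← this]
    exact hT
  have hslices := (Measure.measure_prod_null hSm).1 hSnull
  filter_upwards [hslices] with ξ hξ
  rw [MeasureTheory.ae_iff]
  refine measure_mono_null (fun τ hτ => ?_) hξ
  exact _root_.not_imp.1 hτ

lemma smul_qmp {lam : ℝ} (h : lam ≠ 0) :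
    Measure.QuasiMeasurePreserving (fun ξ : E3 => lam • ξ) volume volume := by
  refine ⟨(measurable_const_smul lam), ?_⟩
  rw [show (fun ξ : E3 => lam • ξ) = (lam • ·) from rfl, Measure.map_addHaar_smul volume h]
  exact Measure.smul_absolutelyContinuous

lemma ae_comp_smul {lam : ℝ} (h : 0 < lam) {p : E3 → Prop} (hp : ∀ᵐ ξ : E3, p ξ) :
    ∀ᵐ ξ : E3, p (lam⁻¹ • ξ) := (smul_qmp (inv_ne_zero h.ne')).ae hp


/-- **Self-similar solutions:** under the hypotheses of the global existence
theorem, if `û₀` is homogeneous of degree `−2` (i.e. `u₀` homogeneous of degree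
`−1`) and `F̂(ξ,t) = F̂(ξ/λ, λ²t)` (i.e. `λ³F(λx,λ²t) = F(x,t)`), then the unique
mild solution `û` with `sup_{t≥0}‖û(t)‖_{PM²} ≤ 2ε` is self-similar:
`û(ξ,t) = λ^{−2} û(ξ/λ, λ²t)` for every `λ > 0`, `t ≥ 0`, a.e. `ξ`. -/
theorem self_similar_solution (η ε : ℝ) (hη : 0 < η) (hB : BilinearEstimate η)
    (hε : 0 < ε) (hε' : ε < 1 / (4 * η))
    (u0 : E3 → V3) (F : E3 → ℝ → V3)
    (hu0m : Measurable u0) (hFm : Measurable (fun p : E3 × ℝ => F p.1 p.2))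
    (hsmall : PMnorm 2 u0 + supPM 0 F < ENNReal.ofReal ε)
    (hu0hom : ∀ lam : ℝ, 0 < lam → ∀ᵐ ξ : E3, u0 ξ = (lam ^ 2)⁻¹ • u0 (lam⁻¹ • ξ))
    (hFhom : ∀ lam : ℝ, 0 < lam → ∀ t : ℝ, 0 ≤ t →
      ∀ᵐ ξ : E3, F ξ t = F (lam⁻¹ • ξ) (lam ^ 2 * t))
    (u : E3 → ℝ → V3) (hu : IsMildSolution u0 F u)
    (hub : supPM 2 u ≤ ENNReal.ofReal (2 * ε))
    (huniq : ∀ v : E3 → ℝ → V3, IsMildSolution u0 F v →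
      supPM 2 v ≤ ENNReal.ofReal (2 * ε) →
      ∀ t : ℝ, 0 ≤ t → ∀ᵐ ξ : E3, v ξ t = u ξ t) :
    ∀ lam : ℝ, 0 < lam → ∀ t : ℝ, 0 ≤ t → ∀ᵐ ξ : E3,
      u ξ t = (lam ^ 2)⁻¹ • u (lam⁻¹ • ξ) (lam ^ 2 * t) := by
  intro lam hlam t ht
  have hc : (lam ^ 2 : ℝ) ≠ 0 := by positivity
  set v : E3 → ℝ → V3 := fun ζ τ => (lam ^ 2)⁻¹ • u (lam⁻¹ • ζ) (lam ^ 2 * τ) with hvdef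
  have hvm : Measurable (fun p : E3 × ℝ => v p.1 p.2) := by
    have : (fun p : E3 × ℝ => v p.1 p.2) = fun p =>
        (lam ^ 2)⁻¹ • (fun q : E3 × ℝ => u q.1 q.2) (lam⁻¹ • p.1, lam ^ 2 * p.2) := rfl
    rw [this]
    exact (hu.1.comp (((measurable_const_smul lam⁻¹).comp measurable_fst).prodMk
      ((measurable_const_mul (lam ^ 2)).comp measurable_snd))).const_smul ((lam ^ 2)⁻¹ : ℝ)
  have hFae := F_ae_slices hlam hFm (hFhom lam hlam)
  have hv : IsMildSolution u0 F v := by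
    refine ⟨hvm, fun s hs => ?_⟩
    have hs2 : (0:ℝ) ≤ lam ^ 2 * s := by positivity
    have hpull := ae_comp_smul hlam (hu.2 (lam ^ 2 * s) hs2)
    filter_upwards [hpull, hFae, hu0hom lam hlam] with ξ hξ hFξ hu0ξ
    obtain ⟨hconv, hBint, hFint, heq⟩ := hξ
    refine ⟨?_, ?_, ?_, ?_⟩
    · -- convolution integrability
      intro τ hτ j k
      have hsτ : lam ^ 2 * τ ∈ Set.Icc (0:ℝ) (lam ^ 2 * s) :=
        ⟨mul_nonneg (by positivity) hτ.1, by nlinarith [hτ.2, sq_nonneg lam]⟩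
      have hbase := (hconv _ hsτ j k).comp_smul (inv_ne_zero hlam.ne')
      have := hbase.smul (c := ((lam ^ 2)⁻¹ * (lam ^ 2)⁻¹ : ℝ))
      refine this.congr (Filter.Eventually.of_forall fun z => ?_)
      show ((lam ^ 2)⁻¹ * (lam ^ 2)⁻¹) •
          (u (lam⁻¹ • ξ - lam⁻¹ • z) (lam ^ 2 * τ) j * u (lam⁻¹ • z) (lam ^ 2 * τ) k)
        = ((lam ^ 2)⁻¹ • u (lam⁻¹ • (ξ - z)) (lam ^ 2 * τ)) j *
          ((lam ^ 2)⁻¹ • u (lam⁻¹ • z) (lam ^ 2 * τ)) k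
      rw [smul_sub]
      show _ = ((lam ^ 2)⁻¹ • u (lam⁻¹ • ξ - lam⁻¹ • z) (lam ^ 2 * τ) j) *
        ((lam ^ 2)⁻¹ • u (lam⁻¹ • z) (lam ^ 2 * τ) k)
      rw [smul_mul_smul_comm]
    · -- Bterm integrand integrability
      set g : ℝ → V3 := fun σ => Real.exp (-(lam ^ 2 * s - σ) * ‖lam⁻¹ • ξ‖ ^ 2) •
        (LerayP (lam⁻¹ • ξ)).mulVec
          (ixW (fun ζ => u ζ σ) (fun ζ => u ζ σ) (lam⁻¹ • ξ)) with hg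
      have hBg : IntervalIntegrable g volume 0 (lam ^ 2 * s) := hBint
      have h2 := hBg.comp_mul_left (c := lam ^ 2)
      rw [zero_div, mul_div_cancel_left₀ _ hc] at h2
      refine h2.congr ?_
      refine fun τ _ => ?_
      rw [hg]
      simp only
      rw [LerayP_smul hlam, exp_scale hlam,
        ixW_scale hlam (fun ζ => u ζ (lam ^ 2 * τ)) (fun ζ => u ζ (lam ^ 2 * τ)) ξ]
    · -- F integrand integrability
      set g : ℝ → V3 := fun σ => Real.exp (-(lam ^ 2 * s - σ) * ‖lam⁻¹ • ξ‖ ^ 2) •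
        (LerayP (lam⁻¹ • ξ)).mulVec (F (lam⁻¹ • ξ) σ) with hg
      have hFg : IntervalIntegrable g volume 0 (lam ^ 2 * s) := hFint
      have h2 := hFg.comp_mul_left (c := lam ^ 2)
      rw [zero_div, mul_div_cancel_left₀ _ hc] at h2
      rw [intervalIntegrable_iff_integrableOn_Ioc_of_le hs] at h2 ⊢
      refine h2.congr ?_
      have hmem : ∀ᵐ τ ∂(volume.restrict (Set.Ioc (0:ℝ) s)), τ ∈ Set.Ioc (0:ℝ) s :=
        ae_restrict_mem measurableSet_Ioc
      filter_upwards [hmem, ae_restrict_of_ae hFξ] with τ hτm hτF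
      rw [hg]
      simp only
      rw [LerayP_smul hlam, exp_scale hlam, ← hτF hτm.1.le]
    · -- the Duhamel identity for v
      have hBs : Bterm v v ξ s = (lam ^ 2)⁻¹ • Bterm u u (lam⁻¹ • ξ) (lam ^ 2 * s) := by
        rw [hvdef]; exact Bterm_scale hlam u ξ s
      have hFs : Fterm F ξ s = (lam ^ 2)⁻¹ • Fterm F (lam⁻¹ • ξ) (lam ^ 2 * s) :=
        Fterm_scale hlam F ξ hs hFξ
      have hexp : Real.exp (-(lam ^ 2 * s) * ‖lam⁻¹ • ξ‖ ^ 2) = Real.exp (-s * ‖ξ‖ ^ 2) := by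
        simpa using exp_scale hlam ξ s 0
      rw [hBs, hFs, hu0ξ]
      show (lam ^ 2)⁻¹ • u (lam⁻¹ • ξ) (lam ^ 2 * s) = _
      rw [heq, smul_add, smul_sub, smul_comm ((lam ^ 2)⁻¹ : ℝ)
          (Real.exp (-(lam ^ 2 * s) * ‖lam⁻¹ • ξ‖ ^ 2)), hexp]
  have hvb : supPM 2 v ≤ ENNReal.ofReal (2 * ε) := by
    refine le_trans ?_ hub
    unfold supPM
    refine iSup_le fun s => iSup_le fun hs => ?_
    have hs2 : (0:ℝ) ≤ lam ^ 2 * s := by positivity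
    have hpm : PMnorm 2 (fun ξ => v ξ s) ≤ PMnorm 2 (fun ξ => u ξ (lam ^ 2 * s)) := by
      unfold PMnorm
      have hpt : ∀ ξ : E3, ENNReal.ofReal (‖ξ‖ ^ (2:ℝ) * ‖v ξ s‖)
          = (fun ζ : E3 => ENNReal.ofReal (‖ζ‖ ^ (2:ℝ) * ‖u ζ (lam ^ 2 * s)‖)) (lam⁻¹ • ξ) := by
        intro ξ
        simp only
        congr 1
        have h2 : ∀ x : ℝ, x ^ (2:ℝ) = x ^ 2 := fun x => by
          rw [show (2:ℝ) = ((2:ℕ):ℝ) by norm_num, Real.rpow_natCast]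
        rw [h2, h2, norm_inv_smul hlam]
        have hnv : ‖v ξ s‖ = (lam ^ 2)⁻¹ * ‖u (lam⁻¹ • ξ) (lam ^ 2 * s)‖ := by
          show ‖(lam ^ 2)⁻¹ • u (lam⁻¹ • ξ) (lam ^ 2 * s)‖ = _
          rw [norm_smul, Real.norm_eq_abs, abs_of_pos (by positivity)]
        rw [hnv, mul_pow]
        ring
      rw [show (fun ξ : E3 => ENNReal.ofReal (‖ξ‖ ^ (2:ℝ) * ‖v ξ s‖))
          = fun ξ => (fun ζ : E3 => ENNReal.ofReal (‖ζ‖ ^ (2:ℝ) * ‖u ζ (lam ^ 2 * s)‖))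
            (lam⁻¹ • ξ) from funext hpt]
      exact essSup_le_of_ae_le _ (ae_comp_smul hlam (ENNReal.ae_le_essSup _))
    exact le_trans hpm (le_iSup_of_le (lam ^ 2 * s) (le_iSup_of_le hs2 le_rfl))
  have hvu := huniq v hv hvb t ht
  filter_upwards [hvu] with ξ hx
  exact hx.symm
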